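/- Let H ∈ (1/2,1), let κ ≥ 1 and p ≥ 1 be integers, and let 0 < γ < H be such that (2p−1)κH − (2γp+2)κ > −1 and 2pκ(H−γ) − κH > 0. Let 0 ≤ s′ < t′ ≤ 1, let C > 0, and let X be a jointly measurable real-valued (or ℝ^d-valued) stochastic process on [s′,t′] such that E[|X_ξ − X_η|^{(2p−1)κ}] ≤ C·|ξ−η|^{(2p−1)κH} for all ξ, η ∈ [s′,t′]. For s ∈ [s′,t′] define μ_s = 4p · ∫_{s′}^s ∫_s^{t′} |X_ξ − X_η|^{2p−1} / |ξ−η|^{2γp+2} dξ dη. Then there exists a constant c, depending only on C, p, κ, γ, H, such that E[ μ_s^κ ] ≤ c · (t′ − s′)^{2pκ(H−γ) − κH} for all s ∈ [s′,t′]. -/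

import Mathlib

open Real MeasureTheory ENNReal

lemma jensen_pow {α : Type*} [MeasurableSpace α] (μ : Measure α) (f : α → ℝ≥0∞)
    (hf : AEMeasurable f μ) (κ : ℕ) (hκ : 1 ≤ κ) :
    (∫⁻ a, f a ∂μ) ^ κ ≤ μ Set.univ ^ (κ - 1) * ∫⁻ a, (f a) ^ κ ∂μ := by
  rcases eq_or_lt_of_le hκ with h1 | h2
  · simp [← h1]
  · have hκR : (1 : ℝ) < (κ : ℝ) := by exact_mod_cast h2
    have hκ0 : (0 : ℝ) < (κ : ℝ) := by positivity
    have hconj := Real.HolderConjugate.conjExponent hκR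
    have key := ENNReal.lintegral_mul_le_Lp_mul_Lq μ hconj hf
      (aemeasurable_const (b := (1 : ℝ≥0∞)))
    simp only [Pi.mul_apply, mul_one, ENNReal.one_rpow, lintegral_const, one_mul] at key
    have key2 := ENNReal.rpow_le_rpow key hκ0.le
    rw [ENNReal.mul_rpow_of_nonneg _ _ hκ0.le, ← ENNReal.rpow_mul, ← ENNReal.rpow_mul,
      one_div_mul_cancel hκ0.ne', ENNReal.rpow_one] at key2
    have e2 : 1 / Real.conjExponent (κ:ℝ) * (κ:ℝ) = ((κ - 1 : ℕ) : ℝ) := by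
      rw [Real.conjExponent, Nat.cast_sub hκ]
      field_simp
      simp
    rw [e2] at key2
    simp only [ENNReal.rpow_natCast] at key2
    rw [mul_comm] at key2
    exact key2

set_option maxHeartbeats 2000000 in
theorem moment_bound_mu
    (H : ℝ) (hH1 : 1 / 2 < H) (hH2 : H < 1) (κ p : ℕ) (hκ : 1 ≤ κ) (hp : 1 ≤ p)
    (γ : ℝ) (hγ0 : 0 < γ) (hγH : γ < H)
    (hcond1 : (2 * (p : ℝ) - 1) * κ * H - (2 * γ * p + 2) * κ > -1)
    (hcond2 : 2 * (p : ℝ) * κ * (H - γ) - κ * H > 0)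
    (C : ℝ) (hC : 0 < C) :
    ∃ c : ℝ, 0 < c ∧
      ∀ (Ω : Type) [MeasureSpace Ω], IsProbabilityMeasure (volume : Measure Ω) →
        ∀ s' t' : ℝ, 0 ≤ s' → s' < t' → t' ≤ 1 →
          ∀ X : ℝ → Ω → ℝ,
            Measurable (Function.uncurry X) →
            (∀ ξ ∈ Set.Icc s' t', ∀ η ∈ Set.Icc s' t',
              (∫⁻ ω, ENNReal.ofReal (|X ξ ω - X η ω| ^ ((2 * p - 1) * κ))) ≤
                ENNReal.ofReal (C * |ξ - η| ^ ((2 * (p : ℝ) - 1) * κ * H))) →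
            ∀ s ∈ Set.Icc s' t',
              (∫⁻ ω, (ENNReal.ofReal (4 * (p : ℝ)) *
                  ∫⁻ η in Set.Icc s' s, ∫⁻ ξ in Set.Icc s t',
                    ENNReal.ofReal (|X ξ ω - X η ω| ^ (2 * p - 1) / |ξ - η| ^ (2 * γ * p + 2)))
                  ^ κ)
                ≤ ENNReal.ofReal (c * (t' - s') ^ (2 * (p : ℝ) * κ * (H - γ) - κ * H)) := by
  have hp0 : (0:ℝ) < p := by exact_mod_cast hp
  set β : ℝ := (2 * (p : ℝ) - 1) * κ * H - (2 * γ * p + 2) * κ with hβdef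
  have hβ : -1 < β := hcond1
  have hβ1 : (0:ℝ) < β + 1 := by linarith
  refine ⟨(4 * (p:ℝ))^κ * C / (β + 1), by positivity, ?_⟩
  intro Ω _ hprob s' t' hs'0 hst ht'1 X hX hmom s hs
  haveI := hprob
  set T : ℝ := t' - s' with hTdef
  have hT : 0 < T := by simp only [hTdef]; linarith
  have hss' : s' ≤ s := hs.1
  have hst' : s ≤ t' := hs.2
  set A1 : Set ℝ := Set.Icc s' s with hA1
  set A2 : Set ℝ := Set.Icc s t' with hA2
  set P : Measure (ℝ × ℝ) := (volume.restrict A1).prod (volume.restrict A2) with hP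
  set F : Ω → ℝ × ℝ → ℝ≥0∞ := fun ω z =>
    ENNReal.ofReal (|X z.2 ω - X z.1 ω| ^ (2 * p - 1) / |z.2 - z.1| ^ (2 * γ * p + 2)) with hF
  -- measurability
  have hF2 : Measurable (Function.uncurry F) := by
    have h1 : Measurable fun q : Ω × (ℝ × ℝ) => X q.2.2 q.1 :=
      hX.comp ((measurable_snd.snd).prodMk measurable_fst)
    have h2 : Measurable fun q : Ω × (ℝ × ℝ) => X q.2.1 q.1 :=
      hX.comp ((measurable_snd.fst).prodMk measurable_fst)
    fun_prop
  have hF1 : ∀ ω, Measurable (F ω) := fun ω =>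
    hF2.comp (measurable_const.prodMk measurable_id)
  set K : ℝ≥0∞ := ENNReal.ofReal (4 * (p:ℝ)) ^ κ * (P Set.univ) ^ (κ - 1) with hK
  have hPuniv : P Set.univ = ENNReal.ofReal (s - s') * ENNReal.ofReal (t' - s) := by
    rw [hP, ← Set.univ_prod_univ, Measure.prod_prod, Measure.restrict_apply MeasurableSet.univ,
      Measure.restrict_apply MeasurableSet.univ, Set.univ_inter, Set.univ_inter, hA1, hA2,
      Real.volume_Icc, Real.volume_Icc]
  have hKtop : K ≠ ⊤ := by
    rw [hK, hPuniv]
    exact ENNReal.mul_ne_top (ENNReal.pow_ne_top ENNReal.ofReal_ne_top)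
      (ENNReal.pow_ne_top (ENNReal.mul_ne_top ENNReal.ofReal_ne_top ENNReal.ofReal_ne_top))
  -- Step 1: pointwise Jensen
  have step1 : ∀ ω, (ENNReal.ofReal (4 * (p : ℝ)) *
      ∫⁻ η in A1, ∫⁻ ξ in A2,
        ENNReal.ofReal (|X ξ ω - X η ω| ^ (2 * p - 1) / |ξ - η| ^ (2 * γ * p + 2))) ^ κ
      ≤ K * ∫⁻ z, (F ω z) ^ κ ∂P := by
    intro ω
    have hiter : (∫⁻ η in A1, ∫⁻ ξ in A2,
        ENNReal.ofReal (|X ξ ω - X η ω| ^ (2 * p - 1) / |ξ - η| ^ (2 * γ * p + 2)))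
        = ∫⁻ z, F ω z ∂P := by
      rw [hP, ← lintegral_prod (F ω) (hF1 ω).aemeasurable]
    rw [mul_pow, hiter, hK, mul_assoc]
    exact mul_le_mul_right (jensen_pow P (F ω) (hF1 ω).aemeasurable κ hκ) _
  -- Step 3 : pointwise moment bound
  have step3 : ∀ᵐ z ∂P, (∫⁻ ω, (F ω z) ^ κ) ≤
      ENNReal.ofReal (C * (z.2 - z.1) ^ β) := by
    have hzmem : ∀ᵐ z ∂P, z ∈ A1 ×ˢ A2 := by
      rw [hP, Measure.prod_restrict]
      exact ae_restrict_mem (measurableSet_Icc.prod measurableSet_Icc)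
    filter_upwards [hzmem] with z hz
    obtain ⟨hz1, hz2⟩ := hz
    rcases eq_or_lt_of_le (hz1.2.trans hz2.1) with heq | hlt
    · -- z.1 = z.2, integrand vanishes
      have hd0 : |z.2 - z.1| ^ (2 * γ * p + 2) = 0 := by
        rw [← heq, sub_self, abs_zero, Real.zero_rpow (by positivity)]
      have : ∀ ω, (F ω z) ^ κ = 0 := by
        intro ω
        have hF0 : F ω z = 0 := by rw [hF]; simp [hd0]
        rw [hF0, zero_pow (Nat.one_le_iff_ne_zero.mp hκ)]
      simp only [this, lintegral_zero]
      exact zero_le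
    · have hd : 0 < z.2 - z.1 := by linarith
      have habs : |z.2 - z.1| = z.2 - z.1 := abs_of_pos hd
      have hDpos : (0:ℝ) < (z.2 - z.1) ^ (2 * γ * (p:ℝ) + 2) :=
        Real.rpow_pos_of_pos hd _
      have hkey : ∀ ω, (F ω z) ^ κ =
          (ENNReal.ofReal ((z.2 - z.1) ^ ((2 * γ * (p:ℝ) + 2) * κ)))⁻¹ *
            ENNReal.ofReal (|X z.2 ω - X z.1 ω| ^ ((2 * p - 1) * κ)) := by
        intro ω
        rw [hF]
        simp only [habs]
        rw [div_eq_mul_inv, ENNReal.ofReal_mul (by positivity),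
          ← Real.rpow_neg hd.le,
          mul_pow, ← ENNReal.ofReal_pow (by positivity), ← ENNReal.ofReal_pow (by positivity),
          ← pow_mul, ← Real.rpow_natCast ((z.2 - z.1) ^ (-(2 * γ * (p:ℝ) + 2))) κ,
          ← Real.rpow_mul hd.le, mul_comm]
        congr 1
        rw [neg_mul, Real.rpow_neg hd.le,
          ENNReal.ofReal_inv_of_pos (Real.rpow_pos_of_pos hd _)]
      have hmem2 : z.2 ∈ Set.Icc s' t' := ⟨hss'.trans hz2.1, hz2.2⟩
      have hmem1 : z.1 ∈ Set.Icc s' t' := ⟨hz1.1, hz1.2.trans hst'⟩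
      have hDN : (ENNReal.ofReal ((z.2 - z.1) ^ ((2 * γ * (p:ℝ) + 2) * κ)))⁻¹ ≠ ⊤ :=
        ENNReal.inv_ne_top.mpr
          (ENNReal.ofReal_pos.mpr (Real.rpow_pos_of_pos hd _)).ne'
      calc (∫⁻ ω, (F ω z) ^ κ)
          = (ENNReal.ofReal ((z.2 - z.1) ^ ((2 * γ * (p:ℝ) + 2) * κ)))⁻¹ *
              ∫⁻ ω, ENNReal.ofReal (|X z.2 ω - X z.1 ω| ^ ((2 * p - 1) * κ)) := by
            rw [← lintegral_const_mul' _ _ hDN]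
            exact lintegral_congr hkey
        _ ≤ (ENNReal.ofReal ((z.2 - z.1) ^ ((2 * γ * (p:ℝ) + 2) * κ)))⁻¹ *
              ENNReal.ofReal (C * |z.2 - z.1| ^ ((2 * (p:ℝ) - 1) * κ * H)) :=
            mul_le_mul_right (hmom z.2 hmem2 z.1 hmem1) _
        _ = ENNReal.ofReal (C * (z.2 - z.1) ^ β) := by
            rw [habs, ← ENNReal.div_eq_inv_mul,
              ← ENNReal.ofReal_div_of_pos (Real.rpow_pos_of_pos hd _),
              mul_div_assoc, ← Real.rpow_sub hd, hβdef]
  -- Step 4 : integral of the bound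
  have hGmeas : Measurable fun z : ℝ × ℝ => ENNReal.ofReal (C * (z.2 - z.1) ^ β) := by
    fun_prop
  have step4 : (∫⁻ z, ENNReal.ofReal (C * (z.2 - z.1) ^ β) ∂P) ≤
      ENNReal.ofReal T * ENNReal.ofReal (C * T ^ (β + 1) / (β + 1)) := by
    have inner : ∀ η ∈ A1, (∫⁻ ξ in A2, ENNReal.ofReal (C * (ξ - η) ^ β)) ≤
        ENNReal.ofReal (C * T ^ (β + 1) / (β + 1)) := by
      intro η hη
      have hηs : η ≤ s := hη.2
      have hηs' : s' ≤ η := hη.1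
      have hii : IntervalIntegrable (fun u : ℝ => u ^ β) volume 0 T :=
        intervalIntegral.intervalIntegrable_rpow' hβ
      have hii2 : IntervalIntegrable (fun ξ : ℝ => (ξ - η) ^ β) volume s t' := by
        have := (intervalIntegral.intervalIntegrable_rpow'
          (a := s - η) (b := t' - η) hβ).comp_sub_right η
        simpa using this
      have hint : IntegrableOn (fun ξ : ℝ => C * (ξ - η) ^ β) (Set.Ioc s t') volume :=
        (hii2.const_mul C).1
      have hnn : 0 ≤ᵐ[volume.restrict (Set.Ioc s t')] fun ξ : ℝ => C * (ξ - η) ^ β := by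
        filter_upwards [ae_restrict_mem measurableSet_Ioc] with ξ hξ
        have : (0:ℝ) ≤ ξ - η := by linarith [hξ.1]
        positivity
      have heq1 : (∫⁻ ξ in A2, ENNReal.ofReal (C * (ξ - η) ^ β)) =
          ENNReal.ofReal (∫ ξ in Set.Ioc s t', C * (ξ - η) ^ β) := by
        rw [hA2, ← Measure.restrict_congr_set Ioc_ae_eq_Icc]
        exact (ofReal_integral_eq_lintegral_ofReal hint hnn).symm
      rw [heq1]
      apply ENNReal.ofReal_le_ofReal
      have e1 : (∫ ξ in Set.Ioc s t', C * (ξ - η) ^ β) =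
          C * ∫ u in (s - η)..(t' - η), u ^ β := by
        rw [← intervalIntegral.integral_of_le hst', intervalIntegral.integral_const_mul]
        congr 1
        exact intervalIntegral.integral_comp_sub_right (fun u => u ^ β) η
      rw [e1, mul_div_assoc]
      apply mul_le_mul_of_nonneg_left _ hC.le
      have e2 : (∫ u in (0:ℝ)..T, u ^ β) = T ^ (β + 1) / (β + 1) := by
        rw [integral_rpow (Or.inl hβ), Real.zero_rpow hβ1.ne', sub_zero]
      rw [← e2]
      apply intervalIntegral.integral_mono_interval (by linarith) (by linarith) (by linarith)
        _ hii
      filter_upwards [ae_restrict_mem measurableSet_Ioc] with u hu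
      exact Real.rpow_nonneg hu.1.le _
    have hP4 : (∫⁻ z, ENNReal.ofReal (C * (z.2 - z.1) ^ β) ∂P) =
        ∫⁻ η in A1, ∫⁻ ξ in A2, ENNReal.ofReal (C * (ξ - η) ^ β) := by
      rw [hP]
      exact lintegral_prod _ hGmeas.aemeasurable
    rw [hP4]
    calc (∫⁻ η in A1, ∫⁻ ξ in A2, ENNReal.ofReal (C * (ξ - η) ^ β))
        ≤ ∫⁻ _η in A1, ENNReal.ofReal (C * T ^ (β + 1) / (β + 1)) := by
          apply lintegral_mono_ae
          filter_upwards [ae_restrict_mem measurableSet_Icc] with η hη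
          exact inner η hη
      _ = volume A1 * ENNReal.ofReal (C * T ^ (β + 1) / (β + 1)) := by
          rw [setLIntegral_const, mul_comm]
      _ ≤ ENNReal.ofReal T * ENNReal.ofReal (C * T ^ (β + 1) / (β + 1)) := by
          apply mul_le_mul_left
          rw [hA1, Real.volume_Icc]
          exact ENNReal.ofReal_le_ofReal (by linarith)
  -- Step 2 + assembly
  have hswap : AEMeasurable
      (Function.uncurry fun ω z => (F ω z) ^ κ) ((volume : Measure Ω).prod P) :=
    (hF2.pow_const κ).aemeasurable
  have hs1 : s - s' ≤ T := by simp only [hTdef]; linarith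
  have hs2 : t' - s ≤ T := by simp only [hTdef]; linarith
  have hs3 : 0 ≤ s - s' := by linarith
  have hs4 : 0 ≤ t' - s := by linarith
  have hTpow : ((T * T) ^ (κ - 1) * (T * T ^ (β + 1))) =
      T ^ (2 * (p : ℝ) * κ * (H - γ) - κ * H) := by
    have h1 : (T * T) ^ (κ - 1) * T = T ^ (2 * (κ - 1) + 1) := by
      rw [← sq, ← pow_mul, pow_succ]
    rw [← mul_assoc, h1, ← Real.rpow_natCast T (2 * (κ - 1) + 1), ← Real.rpow_add hT]
    congr 1
    have hcast : ((2 * (κ - 1) + 1 : ℕ) : ℝ) = 2 * ((κ : ℝ) - 1) + 1 := by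
      push_cast [Nat.cast_sub hκ]
      ring
    rw [hcast, hβdef]
    ring
  calc (∫⁻ ω, (ENNReal.ofReal (4 * (p : ℝ)) *
          ∫⁻ η in A1, ∫⁻ ξ in A2,
            ENNReal.ofReal (|X ξ ω - X η ω| ^ (2 * p - 1) / |ξ - η| ^ (2 * γ * p + 2))) ^ κ)
      ≤ ∫⁻ ω, K * ∫⁻ z, (F ω z) ^ κ ∂P := lintegral_mono step1
    _ = K * ∫⁻ ω, ∫⁻ z, (F ω z) ^ κ ∂P := lintegral_const_mul' _ _ hKtop
    _ = K * ∫⁻ z, (∫⁻ ω, (F ω z) ^ κ) ∂P := by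
        congr 1
        exact lintegral_lintegral_swap hswap
    _ ≤ K * ∫⁻ z, ENNReal.ofReal (C * (z.2 - z.1) ^ β) ∂P :=
        mul_le_mul_right (lintegral_mono_ae step3) _
    _ ≤ K * (ENNReal.ofReal T * ENNReal.ofReal (C * T ^ (β + 1) / (β + 1))) :=
        mul_le_mul_right step4 _
    _ ≤ (ENNReal.ofReal (4 * (p:ℝ)) ^ κ * (ENNReal.ofReal T * ENNReal.ofReal T) ^ (κ - 1)) *
          (ENNReal.ofReal T * ENNReal.ofReal (C * T ^ (β + 1) / (β + 1))) := by
        apply mul_le_mul_left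
        rw [hK, hPuniv]
        exact mul_le_mul_right (pow_le_pow_left' (mul_le_mul'
          (ENNReal.ofReal_le_ofReal hs1) (ENNReal.ofReal_le_ofReal hs2)) _) _
    _ = ENNReal.ofReal ((4 * (p:ℝ)) ^ κ * (T * T) ^ (κ - 1) *
          (T * (C * T ^ (β + 1) / (β + 1)))) := by
        rw [← ENNReal.ofReal_pow (by positivity), ← ENNReal.ofReal_mul hT.le,
          ← ENNReal.ofReal_pow (by positivity), ← ENNReal.ofReal_mul (by positivity),
          ← ENNReal.ofReal_mul (by positivity), ← ENNReal.ofReal_mul (by positivity)]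
    _ ≤ ENNReal.ofReal ((4 * (p:ℝ)) ^ κ * C / (β + 1) *
          (t' - s') ^ (2 * (p : ℝ) * κ * (H - γ) - κ * H)) := by
        apply ENNReal.ofReal_le_ofReal
        apply le_of_eq
        have : (4 * (p:ℝ)) ^ κ * (T * T) ^ (κ - 1) * (T * (C * T ^ (β + 1) / (β + 1))) =
            (4 * (p:ℝ)) ^ κ * C / (β + 1) * ((T * T) ^ (κ - 1) * (T * T ^ (β + 1))) := by
          ring
        rw [this, hTpow, hTdef]
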